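/- Let ω : [0,T] → ℝ^d be continuous with ω(0) = 0, and define H*_ε(ω) := inf { t ≥ 0 : t + sup_{0 ≤ s ≤ t} |ω(s)| ≥ ε } (with inf ∅ = T). Then for any two such paths ω, ω̃ one has |H*_ε(ω) − H*_ε(ω̃)| ≤ sup_{0 ≤ t ≤ T} |ω(t) − ω̃(t)|, i.e. H*_ε is 1-Lipschitz with respect to the uniform norm on paths. -/

import Mathlib

open Set

private lemma hstar_key (d : ℕ) (T ε : ℝ) (hT : 0 < T)
    (ω ω' : ℝ → EuclideanSpace ℝ (Fin d))
    (hω : ContinuousOn ω (Icc 0 T)) (hω' : ContinuousOn ω' (Icc 0 T)) :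
    sInf ({t ∈ Icc 0 T | ε ≤ t + sSup ((fun s => ‖ω s‖) '' Icc 0 t)} ∪ {T}) ≤
    sInf ({t ∈ Icc 0 T | ε ≤ t + sSup ((fun s => ‖ω' s‖) '' Icc 0 t)} ∪ {T}) +
    sSup ((fun t => ‖ω t - ω' t‖) '' Icc 0 T) := by
  set δ : ℝ := sSup ((fun t => ‖ω t - ω' t‖) '' Icc 0 T) with hδdef
  set A : ℝ → ℝ := fun t => sSup ((fun s => ‖ω s‖) '' Icc 0 t) with hA
  set A' : ℝ → ℝ := fun t => sSup ((fun s => ‖ω' s‖) '' Icc 0 t) with hA'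
  set S : Set ℝ := {t ∈ Icc 0 T | ε ≤ t + A t} ∪ {T} with hS
  set S' : Set ℝ := {t ∈ Icc 0 T | ε ≤ t + A' t} ∪ {T} with hS'
  have hdbd : BddAbove ((fun t => ‖ω t - ω' t‖) '' Icc 0 T) :=
    isCompact_Icc.bddAbove_image ((hω.sub hω').norm)
  have hδle : ∀ s ∈ Icc (0:ℝ) T, ‖ω s - ω' s‖ ≤ δ := fun s hs => le_csSup hdbd ⟨s, hs, rfl⟩
  have hδ0 : 0 ≤ δ := le_trans (norm_nonneg _) (hδle 0 ⟨le_refl _, hT.le⟩)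
  have hbddA : ∀ t ∈ Icc (0:ℝ) T, BddAbove ((fun s => ‖ω s‖) '' Icc 0 t) := fun t ht =>
    (isCompact_Icc.bddAbove_image hω.norm).mono (image_mono (Icc_subset_Icc_right ht.2))
  have hSne : S.Nonempty := ⟨T, Or.inr rfl⟩
  have hS'ne : S'.Nonempty := ⟨T, Or.inr rfl⟩
  have hSbdd : BddBelow S := by
    refine ⟨0, fun x hx => ?_⟩
    rcases hx with hx | hx
    · exact hx.1.1
    · simp only [mem_singleton_iff] at hx; exact hx ▸ hT.le
  have hHT : sInf S ≤ T := csInf_le hSbdd (Or.inr rfl)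
  refine le_of_forall_pos_le_add fun η hη => ?_
  obtain ⟨t, htS', htlt⟩ := Real.lt_sInf_add_pos hS'ne hη
  rcases htS' with ht | ht
  · -- t ∈ Icc 0 T with ε ≤ t + A' t
    obtain ⟨htI, hεt⟩ := ht
    rcases le_or_gt T (t + δ) with hTle | hTlt
    · calc sInf S ≤ T := hHT
        _ ≤ t + δ := hTle
        _ ≤ sInf S' + η + δ := by linarith
        _ = sInf S' + δ + η := by ring
    · have htδI : t + δ ∈ Icc (0:ℝ) T := ⟨by linarith [htI.1], hTlt.le⟩
      have hAmono : A t ≤ A (t + δ) := by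
        apply csSup_le_csSup (hbddA _ htδI)
        · exact ⟨‖ω 0‖, 0, ⟨le_refl _, htI.1⟩, rfl⟩
        · exact image_mono (Icc_subset_Icc_right (le_add_of_nonneg_right hδ0))
      have hA'A : sSup ((fun s => ‖ω' s‖) '' Icc 0 t) ≤
          sSup ((fun s => ‖ω s‖) '' Icc 0 t) + δ := by
        refine csSup_le ⟨‖ω' 0‖, 0, ⟨le_refl _, htI.1⟩, rfl⟩ ?_
        rintro x ⟨s, hs, rfl⟩
        have hsT : s ∈ Icc (0:ℝ) T := ⟨hs.1, hs.2.trans htI.2⟩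
        have h1 : ‖ω s‖ ≤ A t := le_csSup (hbddA _ htI) ⟨s, hs, rfl⟩
        have h2 : ‖ω s - ω' s‖ ≤ δ := hδle s hsT
        have h3 : |‖ω s‖ - ‖ω' s‖| ≤ ‖ω s - ω' s‖ := abs_norm_sub_norm_le _ _
        rw [abs_le] at h3
        simp only
        linarith [h3.1]
      have hmem : t + δ ∈ S := Or.inl ⟨htδI, by linarith⟩
      calc sInf S ≤ t + δ := csInf_le hSbdd hmem
        _ ≤ sInf S' + η + δ := by linarith
        _ = sInf S' + δ + η := by ring
  · simp only [mem_singleton_iff] at ht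
    rw [ht] at htlt
    calc sInf S ≤ T := hHT
      _ ≤ sInf S' + η + δ := by linarith
      _ = sInf S' + δ + η := by ring

/-- The hitting time `H*_ε(ω) = inf { t ≥ 0 : t + sup_{0 ≤ s ≤ t} |ω(s)| ≥ ε }` (with
`inf ∅ = T`) is 1-Lipschitz with respect to the uniform norm on continuous paths
`ω : [0,T] → ℝ^d` with `ω 0 = 0`. -/
theorem hstar_lipschitz (d : ℕ) (T ε : ℝ) (hT : 0 < T) (hε : 0 < ε)
    (ω ω' : ℝ → EuclideanSpace ℝ (Fin d))
    (hω : ContinuousOn ω (Icc 0 T)) (hω' : ContinuousOn ω' (Icc 0 T))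
    (h0 : ω 0 = 0) (h0' : ω' 0 = 0) :
    |sInf ({t ∈ Icc 0 T | ε ≤ t + sSup ((fun s => ‖ω s‖) '' Icc 0 t)} ∪ {T}) -
      sInf ({t ∈ Icc 0 T | ε ≤ t + sSup ((fun s => ‖ω' s‖) '' Icc 0 t)} ∪ {T})| ≤
    sSup ((fun t => ‖ω t - ω' t‖) '' Icc 0 T) := by
  have k1 := hstar_key d T ε hT ω ω' hω hω'
  have k2 := hstar_key d T ε hT ω' ω hω' hω
  have heq : (fun t => ‖ω' t - ω t‖) = (fun t => ‖ω t - ω' t‖) :=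
    funext fun t => norm_sub_rev _ _
  rw [heq] at k2
  rw [abs_sub_le_iff]
  exact ⟨by linarith, by linarith⟩
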